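/- (Interior maximum principle for the non-local equation) Let f ∈ C²(ℝ) be bounded with 0 < λ ≤ f ≤ T_M solving f''(y) − c·f'(y) − f(y)⁴ + ∫_ℝ E(y−η)·f(η)⁴ dη = 0 for all y ∈ ℝ, where c > 0. If f attains its supremum or its infimum at some interior point of ℝ, then f is constant. -/

import Mathlib

open MeasureTheory

/-- The normalized exponential integral kernel E(x) = (1/2)·∫_{|x|}^∞ e^{-t}/t dt. -/
noncomputable def Ek (x : ℝ) : ℝ := (1 / 2) * ∫ t in Set.Ioi |x|, Real.exp (-t) / t

lemma meas_h : Measurable (fun t : ℝ => Real.exp (-t) / t) :=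
  (Real.measurable_exp.comp measurable_neg).div measurable_id

lemma intOn {a : ℝ} (ha : 0 < a) :
    IntegrableOn (fun t => Real.exp (-t) / t) (Set.Ioi a) := by
  have hg : IntegrableOn (fun t => Real.exp (-t) / a) (Set.Ioi a) := by
    have := (exp_neg_integrableOn_Ioi a (by norm_num : (0:ℝ) < 1)).div_const a
    simpa [IntegrableOn] using this
  refine hg.mono' meas_h.aestronglyMeasurable.restrict ?_
  refine (ae_restrict_iff' measurableSet_Ioi).2 (Filter.Eventually.of_forall fun t ht => ?_)
  have ht' : 0 < t := lt_trans ha ht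
  rw [Real.norm_eq_abs, abs_div, abs_of_pos (Real.exp_pos _), abs_of_pos ht']
  exact div_le_div_of_nonneg_left (Real.exp_pos _).le ha ht.le

lemma Ek_nonneg (x : ℝ) : 0 ≤ Ek x := by
  refine mul_nonneg (by norm_num) (setIntegral_nonneg measurableSet_Ioi fun t ht => ?_)
  have hx : 0 < t := lt_of_le_of_lt (abs_nonneg x) ht
  positivity

lemma Ek_pos {x : ℝ} (hx : x ≠ 0) : 0 < Ek x := by
  have ha : 0 < |x| := abs_pos.2 hx
  refine mul_pos (by norm_num) ?_
  rw [setIntegral_pos_iff_support_of_nonneg_ae]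
  · have : Set.Ioi |x| ⊆ Function.support (fun t => Real.exp (-t) / t) := by
      intro t ht
      have ht' : 0 < t := lt_trans ha ht
      simp only [Function.mem_support]
      positivity
    rw [Set.inter_eq_right.2 this]
    simp
  · refine (ae_restrict_iff' measurableSet_Ioi).2 (Filter.Eventually.of_forall fun t ht => ?_)
    have ht' : 0 < t := lt_trans ha ht
    positivity
  · exact intOn ha

noncomputable def gk : ℝ × ℝ → ℝ :=
  fun p => Set.indicator {q : ℝ × ℝ | |q.1| < q.2} (fun q => Real.exp (-q.2) / q.2) p

lemma measSet_gk : MeasurableSet {q : ℝ × ℝ | |q.1| < q.2} :=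
  measurableSet_lt (measurable_fst.abs) measurable_snd

lemma meas_gk : Measurable gk :=
  (meas_h.comp measurable_snd).indicator measSet_gk

lemma gk_eq (x t : ℝ) : gk (x, t) = Set.indicator (Set.Ioi |x|) (fun t => Real.exp (-t) / t) t := by
  by_cases h : |x| < t
  · rw [gk, Set.indicator_of_mem (show (x,t) ∈ {q : ℝ × ℝ | |q.1| < q.2} from h),
      Set.indicator_of_mem (Set.mem_Ioi.2 h)]
  · rw [gk, Set.indicator_of_notMem (show (x,t) ∉ {q : ℝ × ℝ | |q.1| < q.2} from h),
      Set.indicator_of_notMem (by simpa using h)]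

lemma Ek_eq (x : ℝ) : Ek x = (1 / 2) * ∫ t, gk (x, t) := by
  rw [Ek]
  congr 1
  rw [← integral_indicator measurableSet_Ioi]
  exact integral_congr_ae (Filter.Eventually.of_forall fun t => (gk_eq x t).symm)

lemma sm_Ek : StronglyMeasurable Ek := by
  have h := meas_gk.stronglyMeasurable.integral_prod_right' (ν := volume)
  have : Ek = fun x => (1/2 : ℝ) * ∫ t, gk (x, t) := funext Ek_eq
  rw [this]
  exact h.const_mul _

lemma lint_Ek : ∫⁻ x, ENNReal.ofReal (Ek x) = 1 := by
  have swap : ∫⁻ x, ∫⁻ t, ENNReal.ofReal (gk (x, t)) = ∫⁻ t, ∫⁻ x, ENNReal.ofReal (gk (x, t)) :=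
    lintegral_lintegral_swap (meas_gk.ennreal_ofReal.aemeasurable)
  -- RHS computation
  have hRin : ∀ t : ℝ, ∫⁻ x, ENNReal.ofReal (gk (x, t)) =
      ENNReal.ofReal (Real.exp (-t) / t) * ENNReal.ofReal (2 * t) := by
    intro t
    have : (fun x => ENNReal.ofReal (gk (x, t))) =
        Set.indicator (Set.Ioo (-t) t) (fun _ => ENNReal.ofReal (Real.exp (-t) / t)) := by
      funext x
      rw [gk_eq]
      by_cases h : |x| < t
      · rw [Set.indicator_of_mem (Set.mem_Ioi.2 h),
          Set.indicator_of_mem (by simpa [Set.mem_Ioo] using abs_lt.1 h)]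
      · rw [Set.indicator_of_notMem (by simpa using h),
          Set.indicator_of_notMem (by simpa [Set.mem_Ioo, ← abs_lt] using h)]
        simp
    rw [this, lintegral_indicator measurableSet_Ioo, setLIntegral_const, Real.volume_Ioo]
    ring_nf
  have hR : ∫⁻ t, ∫⁻ x, ENNReal.ofReal (gk (x, t)) = 2 := by
    simp_rw [hRin]
    have heq : ∀ t : ℝ, ENNReal.ofReal (Real.exp (-t) / t) * ENNReal.ofReal (2 * t) =
        ENNReal.ofReal (Set.indicator (Set.Ioi 0) (fun t => 2 * Real.exp (-t)) t) := by
      intro t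
      rcases le_or_gt t 0 with h | h
      · rw [Set.indicator_of_notMem (by simpa using h)]
        have : ENNReal.ofReal (2 * t) = 0 := by
          rw [ENNReal.ofReal_eq_zero]; linarith
        simp [this]
      · rw [Set.indicator_of_mem (Set.mem_Ioi.2 h), ← ENNReal.ofReal_mul (by positivity)]
        congr 1
        field_simp
    simp_rw [heq]
    have hnn : 0 ≤ᵐ[volume] Set.indicator (Set.Ioi 0) (fun t => 2 * Real.exp (-t)) :=
      Filter.Eventually.of_forall fun t => Set.indicator_nonneg (fun s _ => by positivity) t
    have hint : Integrable (Set.indicator (Set.Ioi 0) (fun t => 2 * Real.exp (-t))) := by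
      rw [integrable_indicator_iff measurableSet_Ioi]
      simpa [IntegrableOn] using (exp_neg_integrableOn_Ioi 0 (by norm_num : (0:ℝ) < 1)).const_mul 2
    rw [← ofReal_integral_eq_lintegral_ofReal hint hnn,
      integral_indicator measurableSet_Ioi]
    rw [integral_const_mul, integral_exp_neg_Ioi]
    norm_num
  -- LHS computation
  have hLin : ∀ x : ℝ, x ≠ 0 → ∫⁻ t, ENNReal.ofReal (gk (x, t)) = ENNReal.ofReal (2 * Ek x) := by
    intro x hx
    have h1 : (fun t => ENNReal.ofReal (gk (x, t))) =
        Set.indicator (Set.Ioi |x|) (fun t => ENNReal.ofReal (Real.exp (-t) / t)) := by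
      funext t
      rw [gk_eq]
      by_cases h : t ∈ Set.Ioi |x|
      · rw [Set.indicator_of_mem h, Set.indicator_of_mem h]
      · rw [Set.indicator_of_notMem h, Set.indicator_of_notMem h]; simp
    rw [h1, lintegral_indicator measurableSet_Ioi]
    have ha : 0 < |x| := abs_pos.2 hx
    rw [← ofReal_integral_eq_lintegral_ofReal (intOn ha)
      ((ae_restrict_iff' measurableSet_Ioi).2 (Filter.Eventually.of_forall fun t ht => by
        have : 0 < t := lt_trans ha ht
        positivity))]
    congr 1
    rw [Ek]
    ring
  have hL : ∫⁻ x, ∫⁻ t, ENNReal.ofReal (gk (x, t)) = ∫⁻ x, ENNReal.ofReal (2 * Ek x) := by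
    refine lintegral_congr_ae ?_
    filter_upwards [compl_mem_ae_iff.2 (Real.volume_singleton (a := (0:ℝ)))] with x hx
    exact hLin x hx
  have key : ∫⁻ x, ENNReal.ofReal (2 * Ek x) = 2 := by
    rw [← hL, swap, hR]
  have h2 : ∫⁻ x, ENNReal.ofReal (2 * Ek x) = 2 * ∫⁻ x, ENNReal.ofReal (Ek x) := by
    simp_rw [ENNReal.ofReal_mul (by norm_num : (0:ℝ) ≤ 2)]
    rw [lintegral_const_mul _ sm_Ek.measurable.ennreal_ofReal]
    norm_num
  rw [h2] at key
  have key' : (2:ENNReal) * ∫⁻ x, ENNReal.ofReal (Ek x) = 2 * 1 := by simpa using key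
  exact (ENNReal.mul_right_inj (by norm_num) (by norm_num)).1 key'

lemma integrable_Ek : Integrable Ek := by
  refine ⟨sm_Ek.aestronglyMeasurable, ?_⟩
  rw [hasFiniteIntegral_iff_ofReal (Filter.Eventually.of_forall Ek_nonneg), lint_Ek]
  exact ENNReal.one_lt_top

lemma integral_Ek : ∫ x, Ek x = 1 := by
  have h := ofReal_integral_eq_lintegral_ofReal integrable_Ek
    (Filter.Eventually.of_forall Ek_nonneg)
  rw [lint_Ek] at h
  have := ENNReal.ofReal_eq_one.1 h
  linarith [this]

lemma contDiff_parts {f : ℝ → ℝ} (hf : ContDiff ℝ 2 f) :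
    Differentiable ℝ f ∧ Continuous (deriv f) ∧ Continuous (deriv (deriv f)) := by
  have h2 : ContDiff ℝ (1 + 1) f := by norm_num; exact hf
  have h1 : ContDiff ℝ 1 (deriv f) := (contDiff_succ_iff_deriv.1 h2).2.2
  exact ⟨(contDiff_succ_iff_deriv.1 h2).1, h1.continuous,
    (contDiff_one_iff_deriv.1 h1).2⟩

lemma deriv2_nonpos_at_max {f : ℝ → ℝ} (hf : ContDiff ℝ 2 f) {y₀ : ℝ}
    (hmax : ∀ z, f z ≤ f y₀) : deriv (deriv f) y₀ ≤ 0 := by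
  obtain ⟨hdiff, hc1, hc2⟩ := contDiff_parts hf
  by_contra hpos
  push_neg at hpos
  have hd0 : deriv f y₀ = 0 := by
    refine IsLocalMax.deriv_eq_zero ?_
    exact Filter.Eventually.of_forall fun z => hmax z
  have hev : ∀ᶠ x in nhds y₀, 0 < deriv (deriv f) x :=
    hc2.continuousAt.eventually_const_lt hpos
  obtain ⟨ε, hε, hball⟩ := Metric.eventually_nhds_iff.1 hev
  set δ := ε / 2 with hδ
  have hδ0 : 0 < δ := by positivity
  have hpos' : ∀ x ∈ Set.Icc y₀ (y₀ + δ), 0 < deriv (deriv f) x := by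
    intro x hx
    refine hball ?_
    rw [Real.dist_eq, abs_lt]
    constructor <;> [linarith [hx.1]; linarith [hx.2, hε]]
  have hmono : StrictMonoOn (deriv f) (Set.Icc y₀ (y₀ + δ)) := by
    refine strictMonoOn_of_deriv_pos (convex_Icc _ _) hc1.continuousOn ?_
    intro x hx
    rw [interior_Icc] at hx
    exact hpos' x ⟨hx.1.le, hx.2.le⟩
  have hpos'' : ∀ x ∈ Set.Ioo y₀ (y₀ + δ), 0 < deriv f x := by
    intro x hx
    have := hmono (Set.left_mem_Icc.2 (by linarith)) ⟨hx.1.le, hx.2.le⟩ hx.1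
    rwa [hd0] at this
  have hmono2 : StrictMonoOn f (Set.Icc y₀ (y₀ + δ)) := by
    refine strictMonoOn_of_deriv_pos (convex_Icc _ _) hf.continuous.continuousOn ?_
    intro x hx
    rw [interior_Icc] at hx
    exact hpos'' x hx
  have : f y₀ < f (y₀ + δ) :=
    hmono2 (Set.left_mem_Icc.2 (by linarith)) (Set.right_mem_Icc.2 (by linarith)) (by linarith)
  exact absurd (hmax (y₀ + δ)) (not_le.2 this)

lemma deriv2_nonneg_at_min {f : ℝ → ℝ} (hf : ContDiff ℝ 2 f) {y₀ : ℝ}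
    (hmin : ∀ z, f y₀ ≤ f z) : 0 ≤ deriv (deriv f) y₀ := by
  have hneg := deriv2_nonpos_at_max (f := fun x => -f x) (hf.neg) (y₀ := y₀)
    (fun z => neg_le_neg (hmin z))
  have h1 : deriv (fun x => -f x) = fun x => -deriv f x := funext fun x => deriv.neg
  rw [h1] at hneg
  have h2 : deriv (fun x => -deriv f x) y₀ = -deriv (deriv f) y₀ := deriv.neg
  rw [h2] at hneg
  linarith


lemma integrable_kernel_mul (y : ℝ) {h : ℝ → ℝ} (hm : AEStronglyMeasurable h volume)
    {C : ℝ} (hbd : ∀ η, |h η| ≤ C) : Integrable (fun η => Ek (y - η) * h η) := by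
  have hEk : Integrable (fun η => Ek (y - η)) := (integrable_comp_sub_left Ek y).2 integrable_Ek
  have := hEk.bdd_mul hm (c := C) (Filter.Eventually.of_forall fun η => by rw [Real.norm_eq_abs]; exact hbd η)
  simpa [mul_comm] using this

lemma integral_kernel (y : ℝ) : ∫ η, Ek (y - η) = 1 := by
  rw [integral_sub_left_eq_self Ek volume y, integral_Ek]

/-- if the kernel integral of a nonneg continuous bounded function vanishes, the function is 0 -/
lemma vanish (y₀ : ℝ) {h : ℝ → ℝ} (hcont : Continuous h) (hnn : ∀ η, 0 ≤ h η)
    {C : ℝ} (hbd : ∀ η, |h η| ≤ C)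
    (hzero : ∫ η, Ek (y₀ - η) * h η = 0) : ∀ z, h z = 0 := by
  have hint : Integrable (fun η => Ek (y₀ - η) * h η) :=
    integrable_kernel_mul y₀ hcont.aestronglyMeasurable hbd
  have hae : (fun η => Ek (y₀ - η) * h η) =ᵐ[volume] 0 :=
    (integral_eq_zero_iff_of_nonneg (fun η => mul_nonneg (Ek_nonneg _) (hnn η)) hint).1 hzero
  have hae2 : h =ᵐ[volume] (fun _ => 0) := by
    filter_upwards [hae, compl_mem_ae_iff.2 (Real.volume_singleton (a := y₀))] with η h1 h2
    have hne : y₀ - η ≠ 0 := sub_ne_zero.2 (Ne.symm h2)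
    have := Ek_pos hne
    have h1' : Ek (y₀ - η) * h η = 0 := h1
    rcases mul_eq_zero.1 h1' with h | h
    · exact absurd h this.ne'
    · exact h
  have := (hcont.ae_eq_iff_eq volume continuous_const).1 hae2
  exact fun z => congrFun this z

/-- interior maximum principle: a bounded solution of the non-local
equation on ℝ that attains its supremum or infimum at an interior point is constant. -/
theorem stmt17 (c T_M lam : ℝ) (hc : 0 < c) (hlam : 0 < lam) (hlT : lam ≤ T_M)
    (f : ℝ → ℝ) (hf : ContDiff ℝ 2 f)
    (hb : ∀ y : ℝ, lam ≤ f y ∧ f y ≤ T_M)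
    (heq : ∀ y : ℝ,
      deriv (deriv f) y - c * deriv f y - (f y) ^ 4 +
        (∫ η : ℝ, Ek (y - η) * (f η) ^ 4) = 0)
    (hext : (∃ y₀ : ℝ, ∀ z : ℝ, f z ≤ f y₀) ∨ (∃ y₀ : ℝ, ∀ z : ℝ, f y₀ ≤ f z)) :
    ∀ a b : ℝ, f a = f b := by
  have hcont : Continuous f := hf.continuous
  have hpos : ∀ y, 0 < f y := fun y => lt_of_lt_of_le hlam (hb y).1
  suffices hconst : ∀ y₀ : ℝ, ((∀ z, f z ≤ f y₀) ∨ (∀ z, f y₀ ≤ f z)) → ∀ z, f z = f y₀ by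
    rcases hext with ⟨y₀, hm⟩ | ⟨y₀, hm⟩
    · intro a b; rw [hconst y₀ (Or.inl hm) a, hconst y₀ (Or.inl hm) b]
    · intro a b; rw [hconst y₀ (Or.inr hm) a, hconst y₀ (Or.inr hm) b]
  intro y₀ hcase
  set m := f y₀ with hm_def
  have hfm : AEStronglyMeasurable (fun η => (f η) ^ 4) volume :=
    (hcont.pow 4).aestronglyMeasurable
  have hbd4 : ∀ η, |(f η) ^ 4| ≤ T_M ^ 4 := fun η => by
    rw [abs_of_nonneg (by positivity)]
    exact pow_le_pow_left₀ (hpos η).le (hb η).2 4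
  have hint1 : Integrable (fun η => Ek (y₀ - η) * (f η) ^ 4) :=
    integrable_kernel_mul y₀ hfm hbd4
  have hint2 : Integrable (fun η => Ek (y₀ - η) * m ^ 4) :=
    integrable_kernel_mul y₀ aestronglyMeasurable_const
      (C := |m ^ 4|) (fun _ => le_refl _)
  have hIm : ∫ η, Ek (y₀ - η) * m ^ 4 = m ^ 4 := by
    rw [integral_mul_const, integral_kernel, one_mul]
  -- pow equality implies equality
  have hpow_eq : ∀ z, f z ^ 4 = m ^ 4 → f z = m := by
    intro z hz
    exact (pow_left_strictMonoOn₀ (n := 4) (by norm_num)).injOn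
      (Set.mem_setOf.2 (hpos z).le) (Set.mem_setOf.2 (hpos y₀).le) hz
  rcases hcase with hm | hm
  · -- maximum case
    have hd0 : deriv f y₀ = 0 :=
      IsLocalMax.deriv_eq_zero (Filter.Eventually.of_forall fun z => hm z)
    have hd2 : deriv (deriv f) y₀ ≤ 0 := deriv2_nonpos_at_max hf hm
    have hIle : ∫ η, Ek (y₀ - η) * (f η) ^ 4 ≤ m ^ 4 := by
      rw [← hIm]
      refine integral_mono hint1 hint2 fun η => ?_
      exact mul_le_mul_of_nonneg_left (pow_le_pow_left₀ (hpos η).le (hm η) 4) (Ek_nonneg _)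
    have hIeq : ∫ η, Ek (y₀ - η) * (f η) ^ 4 = m ^ 4 := by
      have h0 := heq y₀
      rw [hd0] at h0
      have : deriv (deriv f) y₀ = m ^ 4 - ∫ η, Ek (y₀ - η) * (f η) ^ 4 := by
        rw [hm_def]; linarith
      linarith [hd2, hIle, this]
    have hzero : ∫ η, Ek (y₀ - η) * (m ^ 4 - (f η) ^ 4) = 0 := by
      have : (fun η => Ek (y₀ - η) * (m ^ 4 - (f η) ^ 4)) =
          fun η => Ek (y₀ - η) * m ^ 4 - Ek (y₀ - η) * (f η) ^ 4 := by
        funext η; ring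
      rw [this, integral_sub hint2 hint1, hIm, hIeq, sub_self]
    have hvan := vanish y₀ (h := fun η => m ^ 4 - (f η) ^ 4)
      (continuous_const.sub (hcont.pow 4))
      (fun η => by
        show 0 ≤ m ^ 4 - (f η) ^ 4
        have := pow_le_pow_left₀ (hpos η).le (hm η) 4; linarith)
      (C := m ^ 4) (fun η => by
        show |m ^ 4 - (f η) ^ 4| ≤ m ^ 4
        have h1 := pow_le_pow_left₀ (hpos η).le (hm η) 4
        have h2 : 0 < (f η) ^ 4 := pow_pos (hpos η) 4
        rw [abs_of_nonneg (by linarith)]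
        linarith)
      hzero
    intro z
    have hz : m ^ 4 - (f z) ^ 4 = 0 := hvan z
    exact hpow_eq z (by linarith)
  · -- minimum case
    have hd0 : deriv f y₀ = 0 :=
      IsLocalMin.deriv_eq_zero (Filter.Eventually.of_forall fun z => hm z)
    have hd2 : 0 ≤ deriv (deriv f) y₀ := deriv2_nonneg_at_min hf hm
    have hIle : m ^ 4 ≤ ∫ η, Ek (y₀ - η) * (f η) ^ 4 := by
      rw [← hIm]
      refine integral_mono hint2 hint1 fun η => ?_
      exact mul_le_mul_of_nonneg_left (pow_le_pow_left₀ (hpos y₀).le (hm η) 4) (Ek_nonneg _)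
    have hIeq : ∫ η, Ek (y₀ - η) * (f η) ^ 4 = m ^ 4 := by
      have h0 := heq y₀
      rw [hd0] at h0
      have : deriv (deriv f) y₀ = m ^ 4 - ∫ η, Ek (y₀ - η) * (f η) ^ 4 := by
        rw [hm_def]; linarith
      linarith [hd2, hIle, this]
    have hzero : ∫ η, Ek (y₀ - η) * ((f η) ^ 4 - m ^ 4) = 0 := by
      have : (fun η => Ek (y₀ - η) * ((f η) ^ 4 - m ^ 4)) =
          fun η => Ek (y₀ - η) * (f η) ^ 4 - Ek (y₀ - η) * m ^ 4 := by
        funext η; ring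
      rw [this, integral_sub hint1 hint2, hIm, hIeq, sub_self]
    have hvan := vanish y₀ (h := fun η => (f η) ^ 4 - m ^ 4)
      ((hcont.pow 4).sub continuous_const)
      (fun η => by
        show 0 ≤ (f η) ^ 4 - m ^ 4
        have := pow_le_pow_left₀ (hpos y₀).le (hm η) 4; linarith)
      (C := T_M ^ 4) (fun η => by
        show |(f η) ^ 4 - m ^ 4| ≤ T_M ^ 4
        have h0 := pow_le_pow_left₀ (hpos y₀).le (hm η) 4
        have h1 := hbd4 η
        rw [abs_of_nonneg (by positivity)] at h1
        have h2 : 0 < m ^ 4 := pow_pos (hpos y₀) 4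
        rw [abs_of_nonneg (by linarith)]
        linarith)
      hzero
    intro z
    have hz : (f z) ^ 4 - m ^ 4 = 0 := hvan z
    exact hpow_eq z (by linarith)
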